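/- Let k be a field and M a linearly ordered type of monomials whose strict order is well-founded. Let T be a set of monic polynomials in M →₀ k with associated one-step reduction relation →. Suppose that for every monomial m ∈ M and every pair of one-step reductions single(m,1) → g₁ and single(m,1) → g₂, the difference g₁ − g₂ lies in the k-linear span of the set of those h ∈ T with lead(h) < m. Call a polynomial g reduced if the support of g contains no monomial of the form lead(h) with h ∈ T. Then every f ∈ M →₀ k has a unique reduced form: there exists a unique reduced g ∈ M →₀ k such that f − g lies in the k-linear span of T. -/

import Mathlib

open Finsupp Relation

variable {k M : Type*}

/-- The leading monomial of a nonzero polynomial `f : M →₀ k`: the maximum of its support. -/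
noncomputable def leadMon [Zero k] [LinearOrder M] (f : M →₀ k) (hf : f ≠ 0) : M :=
  f.support.max' (Finsupp.support_nonempty_iff.mpr hf)

/-- A polynomial is monic if it is nonzero and its leading coefficient equals 1. -/
def IsMonic [Field k] [LinearOrder M] (f : M →₀ k) : Prop :=
  ∃ hf : f ≠ 0, f (leadMon f hf) = 1

/-- The one-step reduction relation associated with a set `T` of (monic) polynomials:
`f → g` iff there is `h ∈ T` with `f (lead h) ≠ 0` and `g = f - f (lead h) • h`. -/
def StepRel [Field k] [LinearOrder M] (T : Set (M →₀ k)) (f g : M →₀ k) : Prop :=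
  ∃ h ∈ T, ∃ hh : h ≠ 0, f (leadMon h hh) ≠ 0 ∧ g = f - f (leadMon h hh) • h

/-- A polynomial is reduced (w.r.t. `T`) if its support contains no leading
monomial of an element of `T`. -/
def IsReducedPoly [Field k] [LinearOrder M] (T : Set (M →₀ k)) (g : M →₀ k) : Prop :=
  ∀ h ∈ T, ∀ hh : h ≠ 0, leadMon h hh ∉ g.support

section Aux

variable [Field k] [LinearOrder M]

lemma support_single_sub_lt (h : M →₀ k) (hh : h ≠ 0) (hlc : h (leadMon h hh) = 1) :
    ∀ x ∈ (Finsupp.single (leadMon h hh) (1 : k) - h).support, x < leadMon h hh := by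
  intro x hx
  rw [Finsupp.mem_support_iff] at hx
  rcases lt_trichotomy x (leadMon h hh) with hlt | heq | hgt
  · exact hlt
  · exfalso; apply hx; subst heq; simp [hlc]
  · exfalso; apply hx
    have h1 : Finsupp.single (leadMon h hh) (1 : k) x = 0 :=
      Finsupp.single_eq_of_ne' (ne_of_lt hgt)
    have h2 : h x = 0 := by
      by_contra h2
      exact absurd (Finset.le_max' h.support x (Finsupp.mem_support_iff.mpr h2))
        (not_le.mpr hgt)
    simp [h1, h2]

open Classical in
/-- The normal form of a single monomial, defined by well-founded recursion. -/
noncomputable def redMon (hwf : WellFounded ((· < ·) : M → M → Prop))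
    (T : Set (M →₀ k)) : M → (M →₀ k) :=
  hwf.fix fun m IH =>
    if H : ∃ h ∈ T, ∃ hh : h ≠ 0, leadMon h hh = m then
      (((Finsupp.single m (1 : k) - H.choose).support.filter (fun x => x < m)).attach).sum
        (fun x => (Finsupp.single m (1 : k) - H.choose) x.1 •
          IH x.1 (Finset.mem_filter.mp x.2).2)
    else Finsupp.single m 1

/-- The linear normal-form operator. -/
noncomputable def Rmap (hwf : WellFounded ((· < ·) : M → M → Prop))
    (T : Set (M →₀ k)) : (M →₀ k) →ₗ[k] (M →₀ k) :=
  Finsupp.linearCombination k (redMon hwf T)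

variable {hwf : WellFounded ((· < ·) : M → M → Prop)} {T : Set (M →₀ k)}

lemma Rmap_apply (hwf : WellFounded ((· < ·) : M → M → Prop)) (T : Set (M →₀ k)) (p : M →₀ k) :
    Rmap hwf T p = ∑ m ∈ p.support, p m • redMon hwf T m := by
  rw [Rmap, Finsupp.linearCombination_apply, Finsupp.sum]

open Classical in
lemma redMon_def (hwf : WellFounded ((· < ·) : M → M → Prop)) (T : Set (M →₀ k)) (m : M) :
    redMon hwf T m =
    if H : ∃ h ∈ T, ∃ hh : h ≠ 0, leadMon h hh = m then
      (((Finsupp.single m (1 : k) - H.choose).support.filter (fun x => x < m)).attach).sum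
        (fun x => (Finsupp.single m (1 : k) - H.choose) x.1 • redMon hwf T x.1)
    else Finsupp.single m 1 :=
  WellFounded.fix_eq hwf _ m

lemma redMon_of_not (hwf : WellFounded ((· < ·) : M → M → Prop)) (T : Set (M →₀ k))
    {m : M} (hm : ¬ ∃ h ∈ T, ∃ hh : h ≠ 0, leadMon h hh = m) :
    redMon hwf T m = Finsupp.single m 1 := by
  classical
  rw [redMon_def, dif_neg hm]

lemma support_single_sub_lt' (h : M →₀ k) (hh : h ≠ 0) (hlc : h (leadMon h hh) = 1)
    (m : M) (hm : leadMon h hh = m) :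
    ∀ x ∈ (Finsupp.single m (1 : k) - h).support, x < m := by
  subst hm
  exact support_single_sub_lt h hh hlc

lemma support_sub_choose_lt (T : Set (M →₀ k)) (hT : ∀ f ∈ T, IsMonic f)
    {m : M} (H : ∃ h ∈ T, ∃ hh : h ≠ 0, leadMon h hh = m) :
    ∀ x ∈ (Finsupp.single m (1 : k) - H.choose).support, x < m := by
  obtain ⟨hcT, hch, hcl⟩ := H.choose_spec
  obtain ⟨hne, hlc⟩ := hT _ hcT
  exact support_single_sub_lt' H.choose hch hlc m hcl

lemma redMon_of_mem (hwf : WellFounded ((· < ·) : M → M → Prop)) (T : Set (M →₀ k))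
    (hT : ∀ f ∈ T, IsMonic f)
    {m : M} (H : ∃ h ∈ T, ∃ hh : h ≠ 0, leadMon h hh = m) :
    redMon hwf T m = Rmap hwf T (Finsupp.single m 1 - H.choose) := by
  classical
  rw [redMon_def, dif_pos H]
  have hfilt : (Finsupp.single m (1 : k) - H.choose).support.filter (fun x => x < m)
      = (Finsupp.single m (1 : k) - H.choose).support :=
    Finset.filter_true_of_mem (support_sub_choose_lt T hT H)
  rw [Finset.sum_attach _ (fun x => (Finsupp.single m (1 : k) - H.choose) x • redMon hwf T x),
    hfilt, Rmap_apply]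

lemma Rmap_single (hwf : WellFounded ((· < ·) : M → M → Prop)) (T : Set (M →₀ k)) (m : M) :
    Rmap hwf T (Finsupp.single m 1) = redMon hwf T m := by
  rw [Rmap, Finsupp.linearCombination_single, one_smul]

lemma isReduced_Rmap_of (hwf : WellFounded ((· < ·) : M → M → Prop)) (T : Set (M →₀ k))
    (p : M →₀ k)
    (hp : ∀ m ∈ p.support, IsReducedPoly T (redMon hwf T m)) :
    IsReducedPoly T (Rmap hwf T p) := by
  intro h hhT hh
  simp only [Finsupp.mem_support_iff, not_not]
  rw [Rmap_apply, Finsupp.finset_sum_apply]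
  apply Finset.sum_eq_zero
  intro m hm
  have hred := hp m hm h hhT hh
  rw [Finsupp.smul_apply, Finsupp.notMem_support_iff.mp hred, smul_zero]

lemma isReduced_redMon (hwf : WellFounded ((· < ·) : M → M → Prop)) (T : Set (M →₀ k))
    (hT : ∀ f ∈ T, IsMonic f) : ∀ m : M, IsReducedPoly T (redMon hwf T m) := by
  intro m
  induction m using hwf.induction with
  | _ m IH =>
    by_cases H : ∃ h ∈ T, ∃ hh : h ≠ 0, leadMon h hh = m
    · rw [redMon_of_mem hwf T hT H]
      exact isReduced_Rmap_of hwf T _ fun m' hm' => IH m' (support_sub_choose_lt T hT H m' hm')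
    · rw [redMon_of_not hwf T H]
      intro h hhT hh hmem
      have : leadMon h hh = m := by
        have := Finsupp.support_single_subset hmem
        simpa using this
      exact H ⟨h, hhT, hh, this⟩

lemma sub_Rmap_mem (hwf : WellFounded ((· < ·) : M → M → Prop)) (T : Set (M →₀ k))
    (p : M →₀ k)
    (hp : ∀ m ∈ p.support, Finsupp.single m 1 - redMon hwf T m ∈ Submodule.span k T) :
    p - Rmap hwf T p ∈ Submodule.span k T := by
  have key : p - Rmap hwf T p
      = ∑ m ∈ p.support, p m • (Finsupp.single m 1 - redMon hwf T m) := by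
    simp only [smul_sub, Finset.sum_sub_distrib]
    rw [Rmap_apply]
    congr 1
    have : ∀ m ∈ p.support, p m • Finsupp.single m (1 : k) = Finsupp.single m (p m) := by
      intro m _; rw [Finsupp.smul_single', mul_one]
    rw [Finset.sum_congr rfl this, ← Finsupp.sum, Finsupp.sum_single]
  rw [key]
  exact Submodule.sum_mem _ fun m hm => Submodule.smul_mem _ _ (hp m hm)

lemma single_sub_redMon_mem (hwf : WellFounded ((· < ·) : M → M → Prop)) (T : Set (M →₀ k))
    (hT : ∀ f ∈ T, IsMonic f) :
    ∀ m : M, Finsupp.single m 1 - redMon hwf T m ∈ Submodule.span k T := by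
  intro m
  induction m using hwf.induction with
  | _ m IH =>
    by_cases H : ∃ h ∈ T, ∃ hh : h ≠ 0, leadMon h hh = m
    · rw [redMon_of_mem hwf T hT H]
      have h1 : (Finsupp.single m 1 - H.choose) - Rmap hwf T (Finsupp.single m 1 - H.choose)
          ∈ Submodule.span k T :=
        sub_Rmap_mem hwf T _ fun m' hm' => IH m' (support_sub_choose_lt T hT H m' hm')
      have h2 : H.choose ∈ Submodule.span k T := Submodule.subset_span H.choose_spec.1
      have heq : Finsupp.single m (1 : k) - Rmap hwf T (Finsupp.single m 1 - H.choose)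
          = H.choose + ((Finsupp.single m 1 - H.choose)
            - Rmap hwf T (Finsupp.single m 1 - H.choose)) := by abel
      rw [heq]
      exact Submodule.add_mem _ h2 h1
    · rw [redMon_of_not hwf T H, sub_self]
      exact Submodule.zero_mem _

lemma sub_Rmap_mem' (hwf : WellFounded ((· < ·) : M → M → Prop)) (T : Set (M →₀ k))
    (hT : ∀ f ∈ T, IsMonic f) (f : M →₀ k) : f - Rmap hwf T f ∈ Submodule.span k T :=
  sub_Rmap_mem hwf T f fun m _ => single_sub_redMon_mem hwf T hT m

lemma Rmap_reduced_eq (hwf : WellFounded ((· < ·) : M → M → Prop)) (T : Set (M →₀ k))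
    (g : M →₀ k) (hg : IsReducedPoly T g) : Rmap hwf T g = g := by
  rw [Rmap_apply]
  have hnm : ∀ m ∈ g.support, redMon hwf T m = Finsupp.single m 1 := by
    intro m hm
    apply redMon_of_not
    rintro ⟨h, hhT, hh, hl⟩
    exact hg h hhT hh (hl ▸ hm)
  have : ∀ m ∈ g.support, g m • redMon hwf T m = Finsupp.single m (g m) := by
    intro m hm; rw [hnm m hm, Finsupp.smul_single', mul_one]
  rw [Finset.sum_congr rfl this, ← Finsupp.sum, Finsupp.sum_single]

lemma Rmap_mem_T (hwf : WellFounded ((· < ·) : M → M → Prop)) (T : Set (M →₀ k))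
    (hT : ∀ f ∈ T, IsMonic f)
    (hamb : ∀ m : M, ∀ g₁ g₂ : M →₀ k,
      StepRel T (Finsupp.single m 1) g₁ → StepRel T (Finsupp.single m 1) g₂ →
      g₁ - g₂ ∈ Submodule.span k {h : M →₀ k | h ∈ T ∧ ∃ hh : h ≠ 0, leadMon h hh < m}) :
    ∀ h ∈ T, Rmap hwf T h = 0 := by
  suffices key : ∀ m : M, ∀ h ∈ T, ∀ hh : h ≠ 0, leadMon h hh = m → Rmap hwf T h = 0 by
    intro h hhT
    obtain ⟨hh, -⟩ := hT h hhT
    exact key _ h hhT hh rfl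
  intro m
  induction m using hwf.induction with
  | _ m IH =>
    intro h hhT hh hlm
    have H : ∃ h' ∈ T, ∃ hh' : h' ≠ 0, leadMon h' hh' = m := ⟨h, hhT, hh, hlm⟩
    obtain ⟨h₀T, hh₀, hl₀⟩ := H.choose_spec
    have hR0 : Rmap hwf T H.choose = 0 := by
      have h1 := redMon_of_mem hwf T hT H
      rw [map_sub, Rmap_single] at h1
      exact sub_eq_self.mp h1.symm
    have hker : Submodule.span k {h' : M →₀ k | h' ∈ T ∧ ∃ hh' : h' ≠ 0, leadMon h' hh' < m}
        ≤ LinearMap.ker (Rmap hwf T) := by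
      rw [Submodule.span_le]
      rintro x ⟨hxT, hhx, hxl⟩
      exact LinearMap.mem_ker.mpr (IH _ hxl x hxT hhx rfl)
    have hs1 : StepRel T (Finsupp.single m 1) (Finsupp.single m 1 - h) := by
      refine ⟨h, hhT, hh, ?_, ?_⟩
      · rw [hlm]; simp
      · rw [hlm]; simp
    have hs2 : StepRel T (Finsupp.single m 1) (Finsupp.single m 1 - H.choose) := by
      refine ⟨H.choose, h₀T, hh₀, ?_, ?_⟩
      · rw [hl₀]; simp
      · rw [hl₀]; simp
    have hd := hamb m _ _ hs1 hs2
    have heq : (Finsupp.single m (1 : k) - h) - (Finsupp.single m 1 - H.choose)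
        = H.choose - h := by abel
    rw [heq] at hd
    have h3 : Rmap hwf T (H.choose - h) = 0 := hker hd
    rw [map_sub, hR0, zero_sub, neg_eq_zero] at h3
    exact h3

end Aux

/-- Under the local confluence condition on monomials, every polynomial `f` has a
unique reduced form: a unique reduced `g` with `f - g ∈ span T`. -/
theorem exists_unique_reduced_form [Field k] [LinearOrder M]
    (hwf : WellFounded ((· < ·) : M → M → Prop))
    (T : Set (M →₀ k)) (hT : ∀ f ∈ T, IsMonic f)
    (hamb : ∀ m : M, ∀ g₁ g₂ : M →₀ k,
      StepRel T (Finsupp.single m 1) g₁ → StepRel T (Finsupp.single m 1) g₂ →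
      g₁ - g₂ ∈ Submodule.span k {h : M →₀ k | h ∈ T ∧ ∃ hh : h ≠ 0, leadMon h hh < m}) :
    ∀ f : M →₀ k, ∃! g : M →₀ k, IsReducedPoly T g ∧ f - g ∈ Submodule.span k T := by
  have hspan_ker : Submodule.span k T ≤ LinearMap.ker (Rmap hwf T) :=
    Submodule.span_le.mpr fun h hhT =>
      LinearMap.mem_ker.mpr (Rmap_mem_T hwf T hT hamb h hhT)
  intro f
  refine ⟨Rmap hwf T f,
    ⟨isReduced_Rmap_of hwf T f (fun m _ => isReduced_redMon hwf T hT m),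
      sub_Rmap_mem' hwf T hT f⟩, ?_⟩
  rintro g ⟨hgred, hgmem⟩
  have hRred : IsReducedPoly T (Rmap hwf T f) :=
    isReduced_Rmap_of hwf T f (fun m _ => isReduced_redMon hwf T hT m)
  have hmem : g - Rmap hwf T f ∈ Submodule.span k T := by
    have h1 := Submodule.sub_mem _ (sub_Rmap_mem' hwf T hT f) hgmem
    have heq : (f - Rmap hwf T f) - (f - g) = g - Rmap hwf T f := by abel
    rwa [heq] at h1
  have hred : IsReducedPoly T (g - Rmap hwf T f) := by
    intro h hhT hh
    have h1 := Finsupp.notMem_support_iff.mp (hgred h hhT hh)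
    have h2 := Finsupp.notMem_support_iff.mp (hRred h hhT hh)
    rw [Finsupp.mem_support_iff, not_not, Finsupp.sub_apply, h1, h2, sub_zero]
  have hz : g - Rmap hwf T f = 0 := by
    have := Rmap_reduced_eq hwf T _ hred
    rw [LinearMap.mem_ker.mp (hspan_ker hmem)] at this
    exact this.symm
  exact sub_eq_zero.mp hz
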